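/- Let (Ω, P) be a probability space and let X, Y : Ω → M_n(ℂ) be independent, integrable random n×n complex matrices with E[X] = E[Y] = ρ. Let S be the swap matrix on ℂ^n ⊗ ℂ^n with entries S_{(i,j),(k,l)} = 1 if i = l and j = k, and 0 otherwise. Then for all fixed n×n complex matrices O₁, O₂: E[ tr( (X ⊗ Y) · S · (O₁ ⊗ O₂) ) ] = tr( O₁ · ρ · O₂ · ρ ). -/

import Mathlib

open Complex MeasureTheory ProbabilityTheory Matrix
open scoped Kronecker

/-- The Borel-type measurable space structure on `n × n` complex matrices, obtained from the
product σ-algebra on the entries. -/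
noncomputable instance matrixMeasurableSpace (n : ℕ) :
    MeasurableSpace (Matrix (Fin n) (Fin n) ℂ) :=
  inferInstanceAs (MeasurableSpace (Fin n → Fin n → ℂ))

/-- The swap matrix on `ℂ^n ⊗ ℂ^n`, with entries `S_{(i,j),(k,l)} = 1` if `i = l` and `j = k`,
and `0` otherwise. -/
def swapMatrix (n : ℕ) : Matrix (Fin n × Fin n) (Fin n × Fin n) ℂ :=
  fun p q => if p.1 = q.2 ∧ p.2 = q.1 then 1 else 0

lemma indepFun_integral_mul_complex {Ω : Type*} [MeasurableSpace Ω] {μ : Measure Ω}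
    [IsProbabilityMeasure μ] {f g : Ω → ℂ}
    (h : IndepFun f g μ) (hf : Integrable f μ) (hg : Integrable g μ) :
    ∫ ω, f ω * g ω ∂μ = (∫ ω, f ω ∂μ) * ∫ ω, g ω ∂μ := by
  have hfr : Integrable (fun ω => (f ω).re) μ := hf.re
  have hfi : Integrable (fun ω => (f ω).im) μ := hf.im
  have hgr : Integrable (fun ω => (g ω).re) μ := hg.re
  have hgi : Integrable (fun ω => (g ω).im) μ := hg.im
  have i1 : IndepFun (fun ω => (f ω).re) (fun ω => (g ω).re) μ :=
    h.comp Complex.measurable_re Complex.measurable_re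
  have i2 : IndepFun (fun ω => (f ω).re) (fun ω => (g ω).im) μ :=
    h.comp Complex.measurable_re Complex.measurable_im
  have i3 : IndepFun (fun ω => (f ω).im) (fun ω => (g ω).re) μ :=
    h.comp Complex.measurable_im Complex.measurable_re
  have i4 : IndepFun (fun ω => (f ω).im) (fun ω => (g ω).im) μ :=
    h.comp Complex.measurable_im Complex.measurable_im
  have e1 : ∫ ω, (f ω).re * (g ω).re ∂μ = (∫ ω, (f ω).re ∂μ) * ∫ ω, (g ω).re ∂μ := by
    simpa [Pi.mul_apply] using i1.integral_fun_mul_eq_mul_integral hfr.1 hgr.1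
  have e2 : ∫ ω, (f ω).re * (g ω).im ∂μ = (∫ ω, (f ω).re ∂μ) * ∫ ω, (g ω).im ∂μ := by
    simpa [Pi.mul_apply] using i2.integral_fun_mul_eq_mul_integral hfr.1 hgi.1
  have e3 : ∫ ω, (f ω).im * (g ω).re ∂μ = (∫ ω, (f ω).im ∂μ) * ∫ ω, (g ω).re ∂μ := by
    simpa [Pi.mul_apply] using i3.integral_fun_mul_eq_mul_integral hfi.1 hgr.1
  have e4 : ∫ ω, (f ω).im * (g ω).im ∂μ = (∫ ω, (f ω).im ∂μ) * ∫ ω, (g ω).im ∂μ := by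
    simpa [Pi.mul_apply] using i4.integral_fun_mul_eq_mul_integral hfi.1 hgi.1
  have hmul : ∀ ω, f ω * g ω =
      (((f ω).re * (g ω).re - (f ω).im * (g ω).im : ℝ) : ℂ)
        + (((f ω).re * (g ω).im + (f ω).im * (g ω).re : ℝ) : ℂ) * Complex.I := by
    intro ω
    apply Complex.ext <;> simp
  have h11 : Integrable (fun ω => (f ω).re * (g ω).re) μ := by
    exact i1.integrable_mul hfr hgr
  have h12 : Integrable (fun ω => (f ω).re * (g ω).im) μ := by
    exact i2.integrable_mul hfr hgi
  have h13 : Integrable (fun ω => (f ω).im * (g ω).re) μ := by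
    exact i3.integrable_mul hfi hgr
  have h14 : Integrable (fun ω => (f ω).im * (g ω).im) μ := by
    exact i4.integrable_mul hfi hgi
  rw [integral_congr_ae (Filter.Eventually.of_forall hmul)]
  rw [integral_add, integral_mul_const]
  · rw [show (∫ a, (((f a).re * (g a).re - (f a).im * (g a).im : ℝ) : ℂ) ∂μ)
          = ((∫ a, ((f a).re * (g a).re - (f a).im * (g a).im) ∂μ : ℝ) : ℂ) from integral_ofReal,
      show (∫ a, (((f a).re * (g a).im + (f a).im * (g a).re : ℝ) : ℂ) ∂μ)
          = ((∫ a, ((f a).re * (g a).im + (f a).im * (g a).re) ∂μ : ℝ) : ℂ) from integral_ofReal,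
      integral_sub h11 h14, integral_add h12 h13, e1, e2, e3, e4]
    have hfre : ∫ ω, (f ω).re ∂μ = (∫ ω, f ω ∂μ).re := integral_re hf
    have hfim : ∫ ω, (f ω).im ∂μ = (∫ ω, f ω ∂μ).im := integral_im hf
    have hgre : ∫ ω, (g ω).re ∂μ = (∫ ω, g ω ∂μ).re := integral_re hg
    have hgim : ∫ ω, (g ω).im ∂μ = (∫ ω, g ω ∂μ).im := integral_im hg
    rw [hfre, hfim, hgre, hgim]
    apply Complex.ext <;> simp
  · exact (h11.sub h14).ofReal
  · exact ((h12.add h13).ofReal).mul_const _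

lemma swap_trace (n : ℕ) (M N : Matrix (Fin n) (Fin n) ℂ) :
    Matrix.trace (swapMatrix n * (M ⊗ₖ N)) = Matrix.trace (M * N) := by
  rw [Matrix.trace_mul_comm M N]
  simp only [Matrix.trace, Matrix.diag, Matrix.mul_apply, swapMatrix,
    Matrix.kroneckerMap_apply, ite_mul, one_mul, zero_mul, Fintype.sum_prod_type]
  simp [ite_and, Finset.sum_ite_eq, Finset.sum_ite_eq', mul_comm]

lemma kron_swap_trace (n : ℕ) (A B C D : Matrix (Fin n) (Fin n) ℂ) :
    Matrix.trace ((A ⊗ₖ B) * swapMatrix n * (C ⊗ₖ D)) = Matrix.trace (C * A * D * B) := by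
  rw [Matrix.trace_mul_comm, ← Matrix.mul_assoc, ← Matrix.mul_kronecker_mul,
    Matrix.trace_mul_comm, swap_trace, Matrix.mul_assoc, Matrix.mul_assoc, ← Matrix.mul_assoc]

/-- **Unbiasedness of the shadow-distillation swap estimator**: if `X`, `Y` are independent
random matrices with `E[X] = E[Y] = ρ`, then
`E[tr((X ⊗ Y) S (O₁ ⊗ O₂))] = tr(O₁ ρ O₂ ρ)`. -/
theorem swap_shadow_estimator_unbiased
    (n : ℕ) {Ω : Type*} [MeasurableSpace Ω] (P : Measure Ω) [IsProbabilityMeasure P]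
    (X Y : Ω → Matrix (Fin n) (Fin n) ℂ)
    (hXint : ∀ i j, Integrable (fun ω => X ω i j) P)
    (hYint : ∀ i j, Integrable (fun ω => Y ω i j) P)
    (hindep : IndepFun X Y P)
    (ρ : Matrix (Fin n) (Fin n) ℂ)
    (hX : ∀ i j, (∫ ω, X ω i j ∂P) = ρ i j)
    (hY : ∀ i j, (∫ ω, Y ω i j ∂P) = ρ i j)
    (O₁ O₂ : Matrix (Fin n) (Fin n) ℂ) :
    (∫ ω, Matrix.trace ((X ω ⊗ₖ Y ω) * swapMatrix n * (O₁ ⊗ₖ O₂)) ∂P) =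
      Matrix.trace (O₁ * ρ * O₂ * ρ) := by
  have hexp : ∀ A B : Matrix (Fin n) (Fin n) ℂ, Matrix.trace (O₁ * A * O₂ * B) =
      ∑ q : (Fin n × Fin n) × Fin n × Fin n,
        (O₁ q.1.1 q.2.2 * O₂ q.2.1 q.1.2) * (A q.2.2 q.2.1 * B q.1.2 q.1.1) := by
    intro A B
    simp only [Matrix.trace, Matrix.diag, Matrix.mul_apply, Finset.sum_mul, Finset.mul_sum,
      Fintype.sum_prod_type]
    refine Finset.sum_congr rfl fun i _ => Finset.sum_congr rfl fun l _ =>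
      Finset.sum_congr rfl fun k _ => Finset.sum_congr rfl fun j _ => by ring
  have hmeas : ∀ j k : Fin n, Measurable (fun M : Matrix (Fin n) (Fin n) ℂ => M j k) :=
    fun j k => (measurable_pi_apply k).comp (measurable_pi_apply j)
  have hind : ∀ j k l i : Fin n,
      IndepFun (fun ω => X ω j k) (fun ω => Y ω l i) P :=
    fun j k l i => hindep.comp (hmeas j k) (hmeas l i)
  have hmint : ∀ j k l i : Fin n,
      Integrable (fun ω => X ω j k * Y ω l i) P := by
    intro j k l i
    exact (hind j k l i).integrable_mul (hXint j k) (hYint l i)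
  simp_rw [kron_swap_trace, hexp]
  rw [integral_finset_sum]
  · refine Finset.sum_congr rfl fun q _ => ?_
    rw [integral_const_mul, indepFun_integral_mul_complex (hind _ _ _ _) (hXint _ _) (hYint _ _),
      hX, hY]
  · intro q _
    exact (hmint _ _ _ _).const_mul _
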